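/- The family {Z_σ : σ ∈ Γ} is an orthonormal basis of L²(Ω, ℙ): the Z_σ are pairwise orthogonal unit vectors, and their linear span is dense in L²(Ω, ℙ) (the chaotic representation property). -/

import Mathlib

open MeasureTheory ProbabilityTheory
open scoped RealInnerProductSpace ENNReal

noncomputable section

/-- `Ω = {-1,1}^ℕ`, with the two-point set `{-1,1}` coded by `Bool`
(`true` codes `1`, `false` codes `-1`). -/
abbrev Omega : Type := ℕ → Bool

/-- The canonical projection `ζₙ(ω) = ω(n) ∈ {-1,1}`. -/
def zeta (n : ℕ) (ω : Omega) : ℝ := if ω n then 1 else -1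

/-- `Zₙ = (ζₙ + qₙ - pₙ)/(2√(pₙ qₙ))`, as a pointwise function on `Ω`. -/
def Zf (p : ℕ → ℝ) (n : ℕ) (ω : Omega) : ℝ :=
  (zeta n ω + (1 - p n) - p n) / (2 * Real.sqrt (p n * (1 - p n)))

/-- `Z_σ = ∏_{j∈σ} Z_j`, as a pointwise function on `Ω` (`Z_∅ = 1`). -/
def ZSf (p : ℕ → ℝ) (σ : Finset ℕ) (ω : Omega) : ℝ := ∏ j ∈ σ, Zf p j ω

lemma measurable_ZSf (p : ℕ → ℝ) (σ : Finset ℕ) : Measurable (ZSf p σ) := by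
  apply Finset.measurable_prod
  intro j _
  unfold Zf zeta
  apply Measurable.div _ measurable_const
  apply Measurable.sub _ measurable_const
  apply Measurable.add _ measurable_const
  exact (Measurable.of_discrete (f := fun b : Bool => if b = true then (1:ℝ) else -1)).comp
    (measurable_pi_apply j)

/-- A pointwise bound for `Z_j`. -/
def Mb (p : ℕ → ℝ) (j : ℕ) : ℝ :=
  max |(1 + (1 - p j) - p j) / (2 * Real.sqrt (p j * (1 - p j)))|
      |(-1 + (1 - p j) - p j) / (2 * Real.sqrt (p j * (1 - p j)))|

lemma abs_Zf_le (p : ℕ → ℝ) (j : ℕ) (ω : Omega) : |Zf p j ω| ≤ Mb p j := by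
  unfold Zf zeta Mb
  cases h : ω j
  · simpa using le_max_right _ _
  · simpa using le_max_left _ _

lemma memLp_ZSf (p : ℕ → ℝ) (P : Measure Omega) [IsProbabilityMeasure P] (σ : Finset ℕ) :
    MemLp (ZSf p σ) 2 P := by
  refine MemLp.of_bound (measurable_ZSf p σ).aestronglyMeasurable (∏ j ∈ σ, Mb p j) ?_
  filter_upwards with ω
  rw [Real.norm_eq_abs]
  calc |∏ j ∈ σ, Zf p j ω| = ∏ j ∈ σ, |Zf p j ω| := Finset.abs_prod σ _
  _ ≤ ∏ j ∈ σ, Mb p j :=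
      Finset.prod_le_prod (fun j _ => abs_nonneg _) (fun j _ => abs_Zf_le p j ω)

/-- `Z_σ` as an element of the real Hilbert space `L²(Ω, ℙ)`. -/
def ZLp (p : ℕ → ℝ) (P : Measure Omega) [IsProbabilityMeasure P] (σ : Finset ℕ) :
    Lp ℝ 2 P :=
  (memLp_ZSf p P σ).toLp _

/-- The `w`-counting measure `#_w(σ) = ∑_{j∈σ} w(j)`. -/
def cw (w : ℕ → ℝ) (σ : Finset ℕ) : ℝ := ∑ j ∈ σ, w j

/-- The domain `D_w = {ξ ∈ L²(Ω,ℙ) : ∑_{σ∈Γ} #_w(σ) |⟨Z_σ, ξ⟩|² < ∞}`. -/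
def Dw (p : ℕ → ℝ) (P : Measure Omega) [IsProbabilityMeasure P] (w : ℕ → ℝ) :
    Set (Lp ℝ 2 P) :=
  {ξ | Summable fun σ : Finset ℕ => cw w σ * ⟪ZLp p P σ, ξ⟫ ^ 2}

/-- The `w`-energy form `E_w(ξ, η) = ∑_{k=0}^∞ w(k) ⟨∂ₖξ, ∂ₖη⟩`, where `D k` plays the
role of the annihilation operator `∂ₖ`. -/
def Ew {P : Measure Omega} (w : ℕ → ℝ)
    (D : ℕ → (Lp ℝ 2 P →L[ℝ] Lp ℝ 2 P)) (ξ η : Lp ℝ 2 P) : ℝ :=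
  ∑' k, w k * ⟪D k ξ, D k η⟫


lemma measurable_Zf (p : ℕ → ℝ) (j : ℕ) : Measurable (Zf p j) := by
  have h := measurable_ZSf p {j}
  have e : ZSf p {j} = Zf p j := by funext ω; simp [ZSf]
  rwa [e] at h

lemma abs_ZSf_le (p : ℕ → ℝ) (σ : Finset ℕ) (ω : Omega) : |ZSf p σ ω| ≤ ∏ j ∈ σ, Mb p j := by
  calc |∏ j ∈ σ, Zf p j ω| = ∏ j ∈ σ, |Zf p j ω| := Finset.abs_prod σ _
  _ ≤ ∏ j ∈ σ, Mb p j :=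
      Finset.prod_le_prod (fun j _ => abs_nonneg _) (fun j _ => abs_Zf_le p j ω)

lemma sqrt_pq_pos {p : ℕ → ℝ} (hp : ∀ n, 0 < p n ∧ p n < 1) (n : ℕ) :
    0 < Real.sqrt (p n * (1 - p n)) :=
  Real.sqrt_pos.mpr (mul_pos (hp n).1 (by linarith [(hp n).2]))

lemma measurableSet_coord (n : ℕ) (b : Bool) : MeasurableSet {ω : Omega | ω n = b} := by
  have h : {ω : Omega | ω n = b} = (fun ω : Omega => ω n) ⁻¹' {b} := rfl
  rw [h]; exact (measurable_pi_apply n) (measurableSet_singleton b)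

lemma integral_prod_of_iIndep {P : Measure Omega} [IsProbabilityMeasure P]
    {f : ℕ → Omega → ℝ}
    (hindep : iIndepFun f P)
    (hmeas : ∀ i, Measurable (f i)) (s : Finset ℕ) :
    ∫ ω, ∏ j ∈ s, f j ω ∂P = ∏ j ∈ s, ∫ ω, f j ω ∂P := by
  classical
  induction s using Finset.induction_on with
  | empty => simp
  | insert i s hi ih =>
    have h1 : IndepFun (∏ j ∈ s, f j) (f i) P :=
      hindep.indepFun_finset_prod_of_notMem hmeas hi
    have hm : AEStronglyMeasurable (∏ j ∈ s, f j) P := by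
      show AEStronglyMeasurable (fun a => (∏ j ∈ s, f j) a) P
      simp only [Finset.prod_apply]
      exact (Finset.measurable_prod s (fun j _ => hmeas j)).aestronglyMeasurable
    have h2 := h1.symm.integral_mul_eq_mul_integral (hmeas i).aestronglyMeasurable hm
    have h3 : integral P (∏ j ∈ s, f j) = ∫ ω, ∏ j ∈ s, f j ω ∂P := by
      congr 1; funext ω; simp [Finset.prod_apply]
    simp only [Finset.prod_insert hi]
    rw [← ih]
    simpa [Finset.prod_apply, h3] using h2

lemma integral_coord {p : ℕ → ℝ} {P : Measure Omega} [IsProbabilityMeasure P]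
    (hp : ∀ n, 0 < p n ∧ p n < 1)
    (hdist : ∀ n, P {ω : Omega | ω n = true} = ENNReal.ofReal (p n))
    (n : ℕ) (g : Bool → ℝ) :
    ∫ ω, g (ω n) ∂P = p n * g true + (1 - p n) * g false := by
  obtain ⟨h0, h1⟩ := hp n
  have hA : MeasurableSet {ω : Omega | ω n = true} := measurableSet_coord n true
  have hm : Measurable (fun ω : Omega => g (ω n)) :=
    Measurable.of_discrete.comp (measurable_pi_apply n)
  have hint : Integrable (fun ω : Omega => g (ω n)) P := by
    refine Integrable.mono' (integrable_const (max |g true| |g false|)) hm.aestronglyMeasurable ?_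
    filter_upwards with ω
    rw [Real.norm_eq_abs]
    cases ω n
    · exact le_max_right _ _
    · exact le_max_left _ _
  rw [← integral_add_compl hA hint]
  have e1 : ∫ ω in {ω : Omega | ω n = true}, g (ω n) ∂P = p n * g true := by
    rw [setIntegral_congr_fun hA (g := fun _ => g true) (fun ω hω => by
      simp only [Set.mem_setOf_eq] at hω; rw [hω])]
    rw [setIntegral_const, Measure.real, hdist n, ENNReal.toReal_ofReal h0.le, smul_eq_mul]
  have hcompl : {ω : Omega | ω n = true}ᶜ = {ω : Omega | ω n = false} := by
    ext ω; simp only [Set.mem_compl_iff, Set.mem_setOf_eq, Bool.not_eq_true]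
  have e2 : ∫ ω in {ω : Omega | ω n = true}ᶜ, g (ω n) ∂P = (1 - p n) * g false := by
    rw [hcompl, setIntegral_congr_fun (measurableSet_coord n false)
      (g := fun _ => g false) (fun ω hω => by
        simp only [Set.mem_setOf_eq] at hω; rw [hω])]
    rw [setIntegral_const, smul_eq_mul]
    have hPf : P {ω : Omega | ω n = false} = ENNReal.ofReal (1 - p n) := by
      have h2 := prob_compl_eq_one_sub (μ := P) hA
      rw [hcompl] at h2
      rw [h2, hdist n, ENNReal.ofReal_sub _ h0.le, ENNReal.ofReal_one]
    rw [Measure.real, hPf, ENNReal.toReal_ofReal (by linarith)]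
  rw [e1, e2]

lemma integral_Zf {p : ℕ → ℝ} {P : Measure Omega} [IsProbabilityMeasure P]
    (hp : ∀ n, 0 < p n ∧ p n < 1)
    (hdist : ∀ n, P {ω : Omega | ω n = true} = ENNReal.ofReal (p n)) (n : ℕ) :
    ∫ ω, Zf p n ω ∂P = 0 := by
  have h := integral_coord hp hdist n
    (fun b => ((if b then (1:ℝ) else -1) + (1 - p n) - p n) / (2 * Real.sqrt (p n * (1 - p n))))
  simp only at h
  unfold Zf zeta
  rw [h]
  have hs := sqrt_pq_pos hp n
  norm_num
  field_simp
  ring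

lemma integral_Zf_sq {p : ℕ → ℝ} {P : Measure Omega} [IsProbabilityMeasure P]
    (hp : ∀ n, 0 < p n ∧ p n < 1)
    (hdist : ∀ n, P {ω : Omega | ω n = true} = ENNReal.ofReal (p n)) (n : ℕ) :
    ∫ ω, Zf p n ω * Zf p n ω ∂P = 1 := by
  have h := integral_coord hp hdist n
    (fun b => (((if b then (1:ℝ) else -1) + (1 - p n) - p n) / (2 * Real.sqrt (p n * (1 - p n)))) *
      (((if b then (1:ℝ) else -1) + (1 - p n) - p n) / (2 * Real.sqrt (p n * (1 - p n)))))
  simp only at h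
  unfold Zf zeta
  rw [h]
  have hs := sqrt_pq_pos hp n
  have hs2 : Real.sqrt (p n * (1 - p n)) ^ 2 = p n * (1 - p n) :=
    Real.sq_sqrt (mul_pos (hp n).1 (by linarith [(hp n).2])).le
  norm_num
  field_simp
  nlinarith [hs2, (hp n).1, (hp n).2, hs]

lemma integral_ZSf_mul {p : ℕ → ℝ} {P : Measure Omega} [IsProbabilityMeasure P]
    (hp : ∀ n, 0 < p n ∧ p n < 1)
    (hdist : ∀ n, P {ω : Omega | ω n = true} = ENNReal.ofReal (p n))
    (hindep : iIndepFun (fun n (ω : Omega) => ω n) P)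
    (σ τ : Finset ℕ) :
    ∫ ω, ZSf p σ ω * ZSf p τ ω ∂P = if σ = τ then 1 else 0 := by
  classical
  set H : ℕ → Omega → ℝ := fun j ω => Zf p j ω * (if j ∈ σ ∩ τ then Zf p j ω else 1) with hH
  have hpt : ∀ ω, ZSf p σ ω * ZSf p τ ω = ∏ j ∈ σ ∪ τ, H j ω := by
    intro ω
    rw [ZSf, ZSf, ← Finset.prod_union_inter, hH]
    simp only
    rw [Finset.prod_mul_distrib, Finset.prod_ite_mem,
      Finset.inter_eq_right.mpr (Finset.inter_subset_union)]
  have hind : iIndepFun H P := by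
    have h2 := hindep.comp
      (fun j (b : Bool) =>
        ((if b then (1:ℝ) else -1) + (1 - p j) - p j) / (2 * Real.sqrt (p j * (1 - p j))) *
          (if j ∈ σ ∩ τ then
            ((if b then (1:ℝ) else -1) + (1 - p j) - p j) / (2 * Real.sqrt (p j * (1 - p j)))
          else 1))
      (fun j => Measurable.of_discrete)
    exact h2
  have hmeas : ∀ j, Measurable (H j) := by
    intro j
    exact (measurable_Zf p j).mul (Measurable.ite (by measurability) (measurable_Zf p j)
      measurable_const)
  have hone : ∀ j, ∫ ω, H j ω ∂P = if j ∈ σ ∩ τ then 1 else 0 := by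
    intro j
    by_cases hj : j ∈ σ ∩ τ
    · simp only [hH, hj, if_true]
      rw [integral_Zf_sq hp hdist j]
    · simp only [hH, hj, if_false, mul_one]
      rw [integral_Zf hp hdist j]
  rw [integral_congr_ae (Filter.Eventually.of_forall hpt),
    integral_prod_of_iIndep hind hmeas, Finset.prod_congr rfl (fun j _ => hone j)]
  by_cases h : σ = τ
  · subst h
    rw [if_pos rfl, Finset.union_self, Finset.inter_self]
    exact Finset.prod_eq_one (fun x hx => if_pos hx)
  · rw [if_neg h]
    have hex : ∃ j ∈ σ ∪ τ, j ∉ σ ∩ τ := by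
      by_contra hc
      push_neg at hc
      exact h (Finset.Subset.antisymm
        (fun x hx => (Finset.mem_inter.mp (hc x (Finset.mem_union_left _ hx))).2)
        (fun x hx => (Finset.mem_inter.mp (hc x (Finset.mem_union_right _ hx))).1))
    obtain ⟨j, hj1, hj2⟩ := hex
    exact Finset.prod_eq_zero hj1 (by rw [if_neg hj2])

lemma inner_ZLp (p : ℕ → ℝ) (P : Measure Omega) [IsProbabilityMeasure P] (σ : Finset ℕ)
    (ξ : Lp ℝ 2 P) : ⟪ZLp p P σ, ξ⟫ = ∫ ω, ZSf p σ ω * ξ ω ∂P := by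
  rw [MeasureTheory.L2.inner_def]
  refine integral_congr_ae ?_
  filter_upwards [MemLp.coeFn_toLp (memLp_ZSf p P σ)] with ω hω
  rw [RCLike.inner_apply, conj_trivial, ZLp, hω, mul_comm]

lemma indicator_eq_affine {p : ℕ → ℝ} (hp : ∀ n, 0 < p n ∧ p n < 1) (A : ℕ → Bool) (j : ℕ)
    (ω : Omega) :
    (if ω j = A j then (1:ℝ) else 0) =
      (if A j then p j else 1 - p j) +
        ((if A j then (1:ℝ) else -1) * Real.sqrt (p j * (1 - p j))) * Zf p j ω := by
  obtain ⟨h0, h1⟩ := hp j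
  have hs1 : Real.sqrt (p j) ≠ 0 := (Real.sqrt_pos.mpr h0).ne'
  have hs2 : Real.sqrt (1 - p j) ≠ 0 := (Real.sqrt_pos.mpr (by linarith)).ne'
  unfold Zf zeta
  cases hA : A j <;> cases hω : ω j <;> simp only [hA, hω] <;> norm_num <;>
    rw [Real.sqrt_mul h0.le] <;> field_simp <;> ring

lemma setIntegral_box_eq_zero {p : ℕ → ℝ} {P : Measure Omega} [IsProbabilityMeasure P]
    (hp : ∀ n, 0 < p n ∧ p n < 1) (ξ : Lp ℝ 2 P)
    (hξ : ∀ σ : Finset ℕ, ∫ ω, ZSf p σ ω * ξ ω ∂P = 0)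
    (s : Finset ℕ) (A : ℕ → Bool) :
    ∫ ω in {ω : Omega | ∀ j ∈ s, ω j = A j}, ξ ω ∂P = 0 := by
  classical
  set B := {ω : Omega | ∀ j ∈ s, ω j = A j} with hB
  have hBm : MeasurableSet B := by
    have e : B = ⋂ j ∈ s, {ω : Omega | ω j = A j} := by ext ω; simp [hB]
    rw [e]
    exact MeasurableSet.biInter s.countable_toSet (fun j _ => measurableSet_coord j (A j))
  set a : ℕ → ℝ := fun j => if A j then p j else 1 - p j with ha
  set b : ℕ → ℝ := fun j => (if A j then (1:ℝ) else -1) * Real.sqrt (p j * (1 - p j)) with hb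
  have hξint : Integrable (fun ω => ξ ω) P := (Lp.memLp ξ).integrable (by norm_num)
  have hmul : ∀ τ : Finset ℕ, Integrable (fun ω => ZSf p τ ω * ξ ω) P := fun τ =>
    Integrable.bdd_mul hξint (measurable_ZSf p τ).aestronglyMeasurable
      (Filter.Eventually.of_forall fun ω => by rw [Real.norm_eq_abs]; exact abs_ZSf_le p τ ω)
  have hindic : ∀ ω, B.indicator (fun ω => ξ ω) ω
      = (∏ j ∈ s, (a j + b j * Zf p j ω)) * ξ ω := by
    intro ω
    by_cases hω : ω ∈ B
    · rw [Set.indicator_of_mem hω,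
        Finset.prod_eq_one (fun j hj => by
          rw [← indicator_eq_affine hp A j ω, if_pos (hω j hj)]), one_mul]
    · rw [Set.indicator_of_notMem hω]
      have hω' : ∃ j ∈ s, ω j ≠ A j := by
        simp only [hB, Set.mem_setOf_eq] at hω; push_neg at hω; exact hω
      obtain ⟨j, hj, hne⟩ := hω'
      rw [Finset.prod_eq_zero hj (by rw [← indicator_eq_affine hp A j ω, if_neg hne]), zero_mul]
  have hkey : ∀ ω, B.indicator (fun ω => ξ ω) ω
      = ∑ t ∈ s.powerset, ((∏ j ∈ t, a j) * ∏ j ∈ s \ t, b j) * (ZSf p (s \ t) ω * ξ ω) := by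
    intro ω
    rw [hindic ω, Finset.prod_add, Finset.sum_mul]
    refine Finset.sum_congr rfl (fun t _ => ?_)
    rw [Finset.prod_mul_distrib]
    unfold ZSf
    ring
  rw [← integral_indicator hBm, integral_congr_ae (Filter.Eventually.of_forall hkey),
    integral_finset_sum _ (fun t _ => (hmul (s \ t)).const_mul _)]
  refine Finset.sum_eq_zero (fun t _ => ?_)
  rw [MeasureTheory.integral_const_mul, hξ (s \ t), mul_zero]

lemma setIntegral_cyl_eq_zero {P : Measure Omega} [IsProbabilityMeasure P] (ξ : Lp ℝ 2 P)
    (box : ∀ (s : Finset ℕ) (A : ℕ → Bool),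
      ∫ ω in {ω : Omega | ∀ j ∈ s, ω j = A j}, ξ ω ∂P = 0)
    (s : Finset ℕ) (S : Set (∀ i : s, Bool)) :
    ∫ ω in cylinder s S, ξ ω ∂P = 0 := by
  classical
  have hξint : Integrable (fun ω => ξ ω) P := (Lp.memLp ξ).integrable (by norm_num)
  have hdecomp : cylinder s S = ⋃ y ∈ (Set.toFinite S).toFinset,
      ((s.restrict : Omega → (∀ i : s, Bool)) ⁻¹' {y}) := by
    ext ω
    simp only [MeasureTheory.cylinder, Set.mem_preimage, Set.mem_iUnion,
      Set.Finite.mem_toFinset, Set.mem_singleton_iff]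
    constructor
    · intro h; exact ⟨s.restrict ω, h, rfl⟩
    · rintro ⟨y, hy, rfl⟩; exact hy
  have hpre : ∀ y : (∀ i : s, Bool), (s.restrict : Omega → (∀ i : s, Bool)) ⁻¹' {y}
      = {ω : Omega | ∀ j ∈ s, ω j = (fun j => if h : j ∈ s then y ⟨j, h⟩ else true) j} := by
    intro y
    ext ω
    simp only [Set.mem_preimage, Set.mem_singleton_iff, Set.mem_setOf_eq]
    constructor
    · intro h j hj
      rw [dif_pos hj]
      exact congrFun h ⟨j, hj⟩
    · intro h
      funext i
      have h2 := h i i.2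
      rwa [dif_pos i.2] at h2
  rw [hdecomp, integral_biUnion_finset]
  · exact Finset.sum_eq_zero (fun y _ => by rw [hpre y]; exact box s _)
  · exact fun y _ => (s.measurable_restrict) (measurableSet_singleton y)
  · intro y _ y' _ hyy'
    simp only [Function.onFun]
    rw [Set.disjoint_left]
    rintro ω h1 h2
    exact hyy' ((Set.mem_singleton_iff.mp h1).symm.trans (Set.mem_singleton_iff.mp h2))
  · exact fun y _ => hξint.integrableOn

lemma ae_zero_of_cyl {P : Measure Omega} [IsProbabilityMeasure P] (ξ : Lp ℝ 2 P)
    (cyl : ∀ (s : Finset ℕ) (S : Set (∀ i : s, Bool)),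
      ∫ ω in cylinder s S, ξ ω ∂P = 0) :
    ∀ A : Set Omega, MeasurableSet A → ∫ ω in A, ξ ω ∂P = 0 := by
  have hξint : Integrable (fun ω => ξ ω) P := (Lp.memLp ξ).integrable (by norm_num)
  set ν₁ := P.withDensity (fun ω => ENNReal.ofReal (ξ ω)) with hν₁
  set ν₂ := P.withDensity (fun ω => ENNReal.ofReal (-(ξ ω))) with hν₂
  have hfin₁ : IsFiniteMeasure ν₁ := isFiniteMeasure_withDensity_ofReal hξint.2
  have hfin₂ : IsFiniteMeasure ν₂ := isFiniteMeasure_withDensity_ofReal hξint.neg.2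
  have key : ∀ A : Set Omega, MeasurableSet A →
      ∫ ω in A, ξ ω ∂P = (ν₁ A).toReal - (ν₂ A).toReal := by
    intro A hA
    rw [hν₁, hν₂, withDensity_apply _ hA, withDensity_apply _ hA]
    exact integral_eq_lintegral_pos_part_sub_lintegral_neg_part hξint.restrict
  have heq : ν₁ = ν₂ := by
    refine ext_of_generate_finite (measurableCylinders (fun _ : ℕ => Bool))
      (generateFrom_measurableCylinders (α := fun _ : ℕ => Bool)).symm
      (isPiSystem_measurableCylinders (α := fun _ : ℕ => Bool)) ?_ ?_
    · intro A hA
      obtain ⟨s, S, hS, rfl⟩ := (mem_measurableCylinders A).mp hA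
      have hAm : MeasurableSet (cylinder s S) :=
        MeasurableSet.cylinder (α := fun _ : ℕ => Bool) s hS
      have h0 := cyl s S
      rw [key _ hAm] at h0
      have h1 := sub_eq_zero.mp h0
      exact (ENNReal.toReal_eq_toReal_iff' (measure_ne_top ν₁ _) (measure_ne_top ν₂ _)).mp h1
    · have hu : (Set.univ : Set Omega) ∈ measurableCylinders (fun _ : ℕ => Bool) :=
        univ_mem_measurableCylinders _
      obtain ⟨s, S, hS, huS⟩ := (mem_measurableCylinders _).mp hu
      have h0 := cyl s S
      rw [← huS] at h0
      rw [key _ MeasurableSet.univ] at h0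
      have h1 := sub_eq_zero.mp h0
      exact (ENNReal.toReal_eq_toReal_iff' (measure_ne_top ν₁ _) (measure_ne_top ν₂ _)).mp h1
  intro A hA
  rw [key A hA, heq, sub_self]


theorem Z_family_orthonormal_basis
    (p : ℕ → ℝ) (P : Measure Omega) [IsProbabilityMeasure P]
    (hp : ∀ n, 0 < p n ∧ p n < 1)
    (hdist : ∀ n, P {ω : Omega | ω n = true} = ENNReal.ofReal (p n))
    (hindep : iIndepFun (fun n (ω : Omega) => ω n) P) :
    Orthonormal ℝ (fun σ : Finset ℕ => ZLp p P σ) ∧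
    Dense (Submodule.span ℝ (Set.range fun σ : Finset ℕ => ZLp p P σ) :
      Set (Lp ℝ 2 P)) := by
  have hon : Orthonormal ℝ (fun σ : Finset ℕ => ZLp p P σ) := by
    rw [orthonormal_iff_ite]
    intro σ τ
    rw [inner_ZLp]
    have hcoe : (ZLp p P τ : Omega → ℝ) =ᵐ[P] ZSf p τ := MemLp.coeFn_toLp _
    have he : ∫ ω, ZSf p σ ω * (ZLp p P τ : Omega → ℝ) ω ∂P
        = ∫ ω, ZSf p σ ω * ZSf p τ ω ∂P := by
      refine integral_congr_ae ?_
      filter_upwards [hcoe] with ω hω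
      rw [hω]
    rw [he, integral_ZSf_mul hp hdist hindep σ τ]
  refine ⟨hon, ?_⟩
  rw [Submodule.dense_iff_topologicalClosure_eq_top,
    Submodule.topologicalClosure_eq_top_iff, Submodule.eq_bot_iff]
  intro ξ hξmem
  have hσ : ∀ σ : Finset ℕ, ∫ ω, ZSf p σ ω * ξ ω ∂P = 0 := by
    intro σ
    rw [← inner_ZLp]
    exact (Submodule.mem_orthogonal _ ξ).mp hξmem _ (Submodule.subset_span ⟨σ, rfl⟩)
  have hbox := setIntegral_box_eq_zero hp ξ hσ
  have hcyl := setIntegral_cyl_eq_zero ξ hbox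
  have hall := ae_zero_of_cyl ξ hcyl
  rw [Lp.eq_zero_iff_ae_eq_zero]
  exact Lp.ae_eq_zero_of_forall_setIntegral_eq_zero ξ (by norm_num) (by norm_num)
    (fun A hA _ => ((Lp.memLp ξ).integrable (by norm_num)).integrableOn)
    (fun A hA _ => hall A hA)


end
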